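/- If f ∈ ℂ[X,Y] satisfies r·f = f and s·f = −f, then f belongs to the principal ideal generated by X^n − Y^n. -/

import Mathlib

open MvPolynomial

noncomputable section

/-- The action of the generator `r` of the dihedral group `D_n` on `ℂ[X,Y]`:
the `ℂ`-algebra automorphism determined by `X ↦ ζ·X`, `Y ↦ ζ⁻¹·Y`. -/
def rAct (ζ : ℂ) : MvPolynomial (Fin 2) ℂ →ₐ[ℂ] MvPolynomial (Fin 2) ℂ :=
  aeval ![ζ • X 0, ζ⁻¹ • X 1]

/-- The action of the generator `s` of the dihedral group `D_n` on `ℂ[X,Y]`: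
the `ℂ`-algebra automorphism determined by `X ↦ Y`, `Y ↦ X`. -/
def sAct : MvPolynomial (Fin 2) ℂ →ₐ[ℂ] MvPolynomial (Fin 2) ℂ :=
  aeval ![X 1, X 0]

/-- Let `n ≥ 3` be odd, `ζ` a primitive `n`-th root of unity, and let the dihedral group
`W = D_n` act on `ℂ[X,Y]` by `r·X = ζX`, `r·Y = ζ⁻¹Y`, `s·X = Y`, `s·Y = X`.
If `f ∈ ℂ[X,Y]` satisfies `r·f = f` and `s·f = -f`, then `f` belongs to the principal
ideal generated by `Xⁿ - Yⁿ`. -/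
theorem stmt_10 (n : ℕ) (hn : 3 ≤ n) (hodd : Odd n) (ζ : ℂ) (hζ : IsPrimitiveRoot ζ n)
    (f : MvPolynomial (Fin 2) ℂ) (hr : rAct ζ f = f) (hs : sAct f = -f) :
    f ∈ Ideal.span {(X 0 : MvPolynomial (Fin 2) ℂ) ^ n - X 1 ^ n} := by
  have hn0 : n ≠ 0 := by omega
  -- composition identities
  have rcomp : ∀ (A : Type) [CommRing A] [Algebra ℂ A] (a b : A),
      (aeval ![a, b]).comp (rAct ζ) =
        aeval ![algebraMap ℂ A ζ * a, algebraMap ℂ A ζ⁻¹ * b] := by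
    intro A _ _ a b
    apply algHom_ext
    intro i
    fin_cases i <;> simp [rAct, Algebra.smul_def]
  have scomp : ∀ (A : Type) [CommRing A] [Algebra ℂ A] (a b : A),
      (aeval ![a, b]).comp sAct = aeval ![b, a] := by
    intro A _ _ a b
    apply algHom_ext
    intro i
    fin_cases i <;> simp [sAct]
  have key1 : ∀ (A : Type) [CommRing A] [Algebra ℂ A] (a b : A),
      aeval ![algebraMap ℂ A ζ * a, algebraMap ℂ A ζ⁻¹ * b] f = aeval ![a, b] f := by
    intro A _ _ a b
    rw [← rcomp A a b, AlgHom.comp_apply, hr]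
  have key2 : ∀ (A : Type) [CommRing A] [Algebra ℂ A] (m : ℕ) (a b : A),
      aeval ![algebraMap ℂ A (ζ ^ m) * a, algebraMap ℂ A (ζ⁻¹ ^ m) * b] f
        = aeval ![a, b] f := by
    intro A _ _ m a b
    induction m with
    | zero => simp
    | succ m ih =>
      have h1 : algebraMap ℂ A (ζ ^ (m + 1)) * a
          = algebraMap ℂ A ζ * (algebraMap ℂ A (ζ ^ m) * a) := by
        rw [pow_succ, map_mul]; ring
      have h2 : algebraMap ℂ A (ζ⁻¹ ^ (m + 1)) * b
          = algebraMap ℂ A ζ⁻¹ * (algebraMap ℂ A (ζ⁻¹ ^ m) * b) := by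
        rw [pow_succ, map_mul]; ring
      rw [h1, h2, key1 A _ _, ih]
  have key3 : ∀ (A : Type) [CommRing A] [Algebra ℂ A] (a b : A),
      aeval ![b, a] f = - aeval ![a, b] f := by
    intro A _ _ a b
    rw [← scomp A a b, AlgHom.comp_apply, hs, map_neg]
  have key4 : ∀ (A : Type) [CommRing A] [Algebra ℂ A] (k : ℕ), k ≤ n → ∀ (t : A),
      aeval ![algebraMap ℂ A (ζ ^ k) * t, t] f = 0 := by
    intro A _ _ k hk t
    have hz1 : ζ ^ (n - k) * ζ ^ k = 1 := by
      rw [← pow_add, Nat.sub_add_cancel hk, hζ.pow_eq_one]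
    have hz2 : (ζ⁻¹) ^ (n - k) = ζ ^ k := by
      rw [inv_pow]
      exact inv_eq_of_mul_eq_one_right hz1
    have h2' := key2 A (n - k) (algebraMap ℂ A (ζ ^ k) * t) t
    rw [show algebraMap ℂ A (ζ ^ (n - k)) * (algebraMap ℂ A (ζ ^ k) * t) = t by
      rw [← mul_assoc, ← map_mul, hz1, map_one, one_mul], hz2] at h2'
    have h3 := key3 A (algebraMap ℂ A (ζ ^ k) * t) t
    set p := aeval ![algebraMap ℂ A (ζ ^ k) * t, t] f with hp
    have hpp : p = -p := h2'.symm.trans h3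
    have hsum : p + p = 0 := eq_neg_iff_add_eq_zero.mp hpp
    calc p = (2 : ℂ)⁻¹ • (p + p) := by rw [← two_smul ℂ p, smul_smul]; norm_num
    _ = 0 := by rw [hsum, smul_zero]
  -- pass to polynomials in one variable over `R = ℂ[Y]`
  rw [Ideal.mem_span_singleton]
  set R := MvPolynomial (Fin 1) ℂ with hR
  set e := MvPolynomial.finSuccEquiv ℂ 1 with he
  set y : R := X 0 with hy
  set g : Polynomial R := Polynomial.X ^ n - Polynomial.C (y ^ n) with hg
  have hgm : g.Monic := Polynomial.monic_X_pow_sub_C _ hn0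
  have hX1 : e (X 1) = Polynomial.C y := by
    have h01 : (1 : Fin 2) = Fin.succ 0 := rfl
    rw [h01, finSuccEquiv_X_succ]
  have hEg : e (X 0 ^ n - X 1 ^ n) = g := by
    rw [map_sub, map_pow, map_pow, finSuccEquiv_X_zero, hX1, ← Polynomial.C_pow]
  have heval : ∀ k : ℕ, k ≤ n → (e f).eval (algebraMap ℂ R (ζ ^ k) * y) = 0 := by
    intro k hk
    set c : R := algebraMap ℂ R (ζ ^ k) * y with hc
    have hφ : ((Polynomial.aeval c).restrictScalars ℂ).comp e.toAlgHom
        = aeval ![c, y] := by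
      apply algHom_ext
      intro i
      fin_cases i <;>
        simp [e, hX1, finSuccEquiv_X_zero]
    have h5 := AlgHom.congr_fun hφ f
    simp only [AlgHom.comp_apply, AlgHom.restrictScalars_apply, AlgEquiv.toAlgHom_eq_coe,
      AlgHom.coe_coe] at h5
    calc (e f).eval c = Polynomial.aeval c (e f) :=
          (congrFun (Polynomial.coe_aeval_eq_eval c) (e f)).symm
    _ = aeval ![c, y] f := h5
    _ = 0 := key4 R k hk y
  have hdvd : g ∣ e f := by
    rw [← Polynomial.modByMonic_eq_zero_iff_dvd hgm]
    by_cases h0 : e f %ₘ g = 0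
    · exact h0
    · refine Polynomial.eq_zero_of_natDegree_lt_card_of_eval_eq_zero (e f %ₘ g)
        (f := fun k : Fin n => algebraMap ℂ R (ζ ^ (k : ℕ)) * y) ?_ ?_ ?_
      · intro i j hij0
        have hij : algebraMap ℂ R (ζ ^ (i : ℕ)) * y = algebraMap ℂ R (ζ ^ (j : ℕ)) * y := hij0
        have hy0 : y ≠ 0 := MvPolynomial.X_ne_zero 0
        have hsub : (algebraMap ℂ R (ζ ^ (i : ℕ)) - algebraMap ℂ R (ζ ^ (j : ℕ))) * y = 0 := by
          rw [sub_mul, hij, sub_self]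
        rcases mul_eq_zero.mp hsub with h | h
        · have hCeq : ζ ^ (i : ℕ) = ζ ^ (j : ℕ) := by
            have h' := sub_eq_zero.mp h
            exact MvPolynomial.C_injective (Fin 1) ℂ
              (by rw [← MvPolynomial.algebraMap_eq]; exact h')
          exact Fin.ext (hζ.pow_inj i.isLt j.isLt hCeq)
        · exact absurd h hy0
      · intro k
        set c : R := algebraMap ℂ R (ζ ^ (k : ℕ)) * y with hc
        have hzn : (ζ ^ (k : ℕ)) ^ n = 1 := by
          rw [← pow_mul, mul_comm, pow_mul, hζ.pow_eq_one, one_pow]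
        have hcn : c ^ n = y ^ n := by
          rw [hc, mul_pow, ← map_pow, hzn, map_one, one_mul]
        have hgc : g.eval c = 0 := by
          rw [hg]
          simp only [Polynomial.eval_sub, Polynomial.eval_pow, Polynomial.eval_X,
            Polynomial.eval_C]
          rw [hcn, sub_self]
        have hdm := Polynomial.modByMonic_add_div (e f) g
        have heq := congrArg (Polynomial.eval c) hdm
        simp only [Polynomial.eval_add, Polynomial.eval_mul, hgc, zero_mul, add_zero] at heq
        rw [heq]
        exact heval (k : ℕ) k.isLt.le
      · have hdeg : (e f %ₘ g).degree < g.degree := Polynomial.degree_modByMonic_lt _ hgm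
        have hgdeg : g.degree = n := Polynomial.degree_X_pow_sub_C (by omega) _
        rw [Fintype.card_fin]
        exact (Polynomial.natDegree_lt_iff_degree_lt h0).mpr (hgdeg ▸ hdeg)
  have hX01 : (X 0 ^ n - X 1 ^ n : MvPolynomial (Fin 2) ℂ) = e.symm g := by
    rw [← hEg, AlgEquiv.symm_apply_apply]
  rw [hX01]
  have hfin := map_dvd e.symm.toAlgHom hdvd
  simpa using hfin

end
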